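/- For every rule number N in the set {90, 105, 150}, the elementary cellular automaton F_N is positively expansive. -/

import Mathlib

/-- Cantor metric on configurations `ℤ → Bool`. -/
noncomputable def dC (x y : ℤ → Bool) : ℝ :=
  ∑' i : ℤ, if x i = y i then 0 else (1 / 2 : ℝ) ^ i.natAbs

/-- Local rule of the ECA with rule number `N`:
`(a,b,c)` is mapped to the coefficient of `2^(4a+2b+c)` in the binary expansion of `N`. -/
def localRule (N : ℕ) (a b c : Bool) : Bool :=
  N.testBit (4 * a.toNat + 2 * b.toNat + c.toNat)

/-- The elementary cellular automaton with rule number `N`. -/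
def eca (N : ℕ) (x : ℤ → Bool) : ℤ → Bool :=
  fun i => localRule N (x (i - 1)) (x i) (x (i + 1))

/-- `x` belongs to the cylinder `[u]_0`. -/
def inCyl (u : List Bool) (x : ℤ → Bool) : Prop :=
  ∀ j : Fin u.length, x ((j : ℕ) : ℤ) = u.get j

/-- `u` is an `m`-blocking word for `F`. -/
def Blocking (F : (ℤ → Bool) → ℤ → Bool) (m : ℕ) (u : List Bool) : Prop :=
  m ≤ u.length ∧ ∃ q : ℕ, q + m ≤ u.length ∧
    ∀ x y : ℤ → Bool, inCyl u x → inCyl u y → ∀ n : ℕ, ∀ j : ℤ,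
      (q : ℤ) ≤ j → j < (q : ℤ) + (m : ℤ) → F^[n] x j = F^[n] y j

/-- `x` is an equicontinuity point of `F`. -/
def EquicontinuityPoint (F : (ℤ → Bool) → ℤ → Bool) (x : ℤ → Bool) : Prop :=
  ∀ ε : ℝ, 0 < ε → ∃ δ : ℝ, 0 < δ ∧ ∀ y : ℤ → Bool, dC x y < δ →
    ∀ n : ℕ, dC (F^[n] x) (F^[n] y) < ε

/-- `F` is almost equicontinuous: it has at least one equicontinuity point. -/
def AlmostEquicontinuousCA (F : (ℤ → Bool) → ℤ → Bool) : Prop :=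
  ∃ x : ℤ → Bool, EquicontinuityPoint F x

/-- `F` is equicontinuous: every point is an equicontinuity point. -/
def EquicontinuousCA (F : (ℤ → Bool) → ℤ → Bool) : Prop :=
  ∀ x : ℤ → Bool, EquicontinuityPoint F x

/-- `F` is sensitive to initial conditions. -/
def SensitiveCA (F : (ℤ → Bool) → ℤ → Bool) : Prop :=
  ∃ ε : ℝ, 0 < ε ∧ ∀ x : ℤ → Bool, ∀ δ : ℝ, 0 < δ →
    ∃ y : ℤ → Bool, dC x y < δ ∧ ∃ n : ℕ, ε ≤ dC (F^[n] x) (F^[n] y)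

/-- `F` is positively expansive. -/
def PosExpansiveCA (F : (ℤ → Bool) → ℤ → Bool) : Prop :=
  ∃ ε : ℝ, 0 < ε ∧ ∀ x y : ℤ → Bool, x ≠ y →
    ∃ n : ℕ, ε ≤ dC (F^[n] x) (F^[n] y)

/-- The power `σ^q` of the shift map, for `q : ℤ` : `(σ^q x)_i = x_{i+q}`. -/
def shiftBy (q : ℤ) (x : ℤ → Bool) : ℤ → Bool := fun i => x (i + q)

/-- `F` is left-permutive. -/
def LeftPermutive (N : ℕ) : Prop :=
  ∀ b c : Bool, Function.Bijective (fun a => localRule N a b c)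

/-- `F` is right-permutive. -/
def RightPermutive (N : ℕ) : Prop :=
  ∀ a b : Bool, Function.Bijective (fun c => localRule N a b c)

/-- `U` is open in the Cantor metric topology. -/
def IsOpenC (U : Set (ℤ → Bool)) : Prop :=
  ∀ x ∈ U, ∃ δ : ℝ, 0 < δ ∧ ∀ y : ℤ → Bool, dC x y < δ → y ∈ U

/-- `F` is topologically transitive. -/
def TransitiveCA (F : (ℤ → Bool) → ℤ → Bool) : Prop :=
  ∀ U V : Set (ℤ → Bool), IsOpenC U → IsOpenC V → U.Nonempty → V.Nonempty →
    ∃ n : ℕ, 0 < n ∧ ((F^[n]) '' U ∩ V).Nonempty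


lemma summable_geo_int : Summable (fun i : ℤ => ((1/2:ℝ)) ^ i.natAbs) := by
  apply Summable.of_nat_of_neg
  · simpa using summable_geometric_of_lt_one (by norm_num : (0:ℝ) ≤ 1/2) (by norm_num)
  · simpa using summable_geometric_of_lt_one (by norm_num : (0:ℝ) ≤ 1/2) (by norm_num)

lemma dC_summand_summable (x y : ℤ → Bool) :
    Summable (fun i : ℤ => if x i = y i then (0:ℝ) else (1/2:ℝ) ^ i.natAbs) := by
  refine Summable.of_nonneg_of_le (fun i => ?_) (fun i => ?_) summable_geo_int
  · split <;> positivity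
  · split
    · positivity
    · exact le_refl _

lemma dC_ge (x y : ℤ → Bool) (j : ℤ) (hne : x j ≠ y j) :
    ((1/2:ℝ)) ^ j.natAbs ≤ dC x y := by
  have h := Summable.le_tsum (dC_summand_summable x y) j
    (fun i _ => by split <;> positivity)
  simpa [dC, if_neg hne] using h

lemma agree_of_col (N : ℕ)
    (hL : ∀ a a' b c, localRule N a b c = localRule N a' b c → a = a')
    (hR : ∀ a b c c', localRule N a b c = localRule N a b c' → c = c')
    (x y : ℤ → Bool)
    (h : ∀ n : ℕ, (eca N)^[n] x 0 = (eca N)^[n] y 0 ∧ (eca N)^[n] x 1 = (eca N)^[n] y 1) :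
    x = y := by
  have key : ∀ k : ℕ, ∀ n : ℕ, ∀ j : ℤ, -(k:ℤ) ≤ j → j ≤ (k:ℤ) + 1 →
      (eca N)^[n] x j = (eca N)^[n] y j := by
    intro k
    induction k with
    | zero =>
      intro n j h1 h2
      push_cast at h1 h2
      interval_cases j
      · exact (h n).1
      · exact (h n).2
    | succ k ih =>
      intro n j h1 h2
      push_cast at h1 h2
      by_cases hj1 : j = (k:ℤ) + 2
      · subst hj1
        have hcol := ih (n+1) ((k:ℤ)+1) (by omega) (by omega)
        rw [Function.iterate_succ_apply', Function.iterate_succ_apply'] at hcol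
        simp only [eca] at hcol
        have e1 : (k:ℤ) + 1 - 1 = (k:ℤ) := by ring
        have e2 : (k:ℤ) + 1 + 1 = (k:ℤ) + 2 := by ring
        rw [e1, e2] at hcol
        rw [ih n (k:ℤ) (by omega) (by omega), ih n ((k:ℤ)+1) (by omega) (by omega)] at hcol
        exact hR _ _ _ _ hcol
      · by_cases hj2 : j = -((k:ℤ) + 1)
        · subst hj2
          have hcol := ih (n+1) (-(k:ℤ)) (by omega) (by omega)
          rw [Function.iterate_succ_apply', Function.iterate_succ_apply'] at hcol
          simp only [eca] at hcol
          have e1 : -(k:ℤ) - 1 = -((k:ℤ) + 1) := by ring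
          have e2 : -(k:ℤ) + 1 = -(k:ℤ) + 1 := rfl
          rw [e1] at hcol
          rw [ih n (-(k:ℤ)) (by omega) (by omega),
            ih n (-(k:ℤ)+1) (by omega) (by omega)] at hcol
          exact hL _ _ _ _ hcol
        · exact ih n j (by omega) (by omega)
  funext i
  have := key i.natAbs 0 i (by omega) (by omega)
  simpa using this

lemma posExp_of_biperm (N : ℕ)
    (hL : ∀ a a' b c, localRule N a b c = localRule N a' b c → a = a')
    (hR : ∀ a b c c', localRule N a b c = localRule N a b c' → c = c') :
    PosExpansiveCA (eca N) := by
  refine ⟨1/2, by norm_num, fun x y hxy => ?_⟩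
  by_contra hcon
  push_neg at hcon
  apply hxy
  apply agree_of_col N hL hR
  intro n
  have hn := hcon n
  constructor
  · by_contra hne
    have := dC_ge ((eca N)^[n] x) ((eca N)^[n] y) 0 hne
    simp at this
    linarith
  · by_contra hne
    have := dC_ge ((eca N)^[n] x) ((eca N)^[n] y) 1 hne
    simp at this
    linarith

/-- The ECA rules 90, 105 and 150 are positively expansive. -/
theorem eca_positively_expansive_rules :
    ∀ N ∈ ({90, 105, 150} : Finset ℕ), PosExpansiveCA (eca N) := by
  intro N hN
  have hperm : (∀ a a' b c, localRule N a b c = localRule N a' b c → a = a') ∧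
      (∀ a b c c', localRule N a b c = localRule N a b c' → c = c') := by
    fin_cases hN <;> exact ⟨by decide, by decide⟩
  exact posExp_of_biperm N hperm.1 hperm.2
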